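/- arXiv:1501.00756 — 6 statements merged into one kernel-verified Lean document; each statement's English description precedes it below -/
import Mathlib

section
/- Let x₁,…,x_N ∈ ℝ^D, let F be a finite set of functions from {0,1}^L to ℝ^D, and let H be a finite set of functions from ℝ^D to {0,1}^L. Then there exists a finite μ₀ ≥ 0 such that for every μ > μ₀, every f ∈ F, every h ∈ H, and every n ∈ {1,…,N}, the code h(x_n) is a global minimizer over z ∈ {0,1}^L of the function z ↦ ‖x_n − f(z)‖² + μ‖z − h(x_n)‖². -/
open Matrix BigOperators

/-- For finitely many decoders `f ∈ F` and encoders `h ∈ H` (with binary outputs), there is a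
finite `μ₀ ≥ 0` such that for every `μ > μ₀`, every `f ∈ F`, `h ∈ H` and every data point `x n`,
the code `h(x n)` is a global minimizer of `z ↦ ‖x n − f(z)‖² + μ‖z − h(x n)‖²` over
`z ∈ {0,1}^L`. -/
theorem stmt_4 {D L N : ℕ} (x : Fin N → Fin D → ℝ)
    (F : Set ((Fin L → ℝ) → Fin D → ℝ)) (hF : F.Finite)
    (H : Set ((Fin D → ℝ) → Fin L → ℝ)) (hH : H.Finite)
    (hHbin : ∀ h ∈ H, ∀ v : Fin D → ℝ, ∀ l, h v l = 0 ∨ h v l = 1) :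
    ∃ μ₀ : ℝ, 0 ≤ μ₀ ∧ ∀ μ : ℝ, μ₀ < μ → ∀ f ∈ F, ∀ h ∈ H, ∀ n : Fin N,
      ∀ z : Fin L → ℝ, (∀ l, z l = 0 ∨ z l = 1) →
        ∑ i, (x n i - f (h (x n)) i) ^ 2
            + μ * ∑ l, (h (x n) l - h (x n) l) ^ 2
          ≤ ∑ i, (x n i - f z i) ^ 2 + μ * ∑ l, (z l - h (x n) l) ^ 2 := by
  -- The set of possible reconstruction errors is finite
  set A : Set ℝ := (fun p : ((Fin L → ℝ) → Fin D → ℝ) × ((Fin D → ℝ) → Fin L → ℝ) × Fin N =>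
      ∑ i, (x p.2.2 i - p.1 (p.2.1 (x p.2.2)) i) ^ 2) '' (F ×ˢ H ×ˢ Set.univ) with hA
  have hAfin : A.Finite := ((hF.prod (hH.prod (Set.finite_univ))).image _)
  obtain ⟨C, hC⟩ := hAfin.bddAbove
  refine ⟨max C 0, le_max_right _ _, ?_⟩
  intro μ hμ f hf h hh n z hz
  have hμ0 : 0 < μ := lt_of_le_of_lt (le_max_right _ _) hμ
  have hLHS : ∑ l, (h (x n) l - h (x n) l) ^ 2 = 0 := by simp
  rw [hLHS, mul_zero, add_zero]
  by_cases hzeq : z = h (x n)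
  · rw [hzeq]
    have : ∑ l, (h (x n) l - h (x n) l) ^ 2 = 0 := by simp
    rw [this, mul_zero, add_zero]
  · -- some coordinate differs, so the penalty term is at least μ
    have hbound : ∑ i, (x n i - f (h (x n)) i) ^ 2 ≤ C := by
      apply hC
      exact ⟨⟨f, h, n⟩, ⟨hf, hh, trivial⟩, rfl⟩
    obtain ⟨l0, hl0⟩ : ∃ l, z l ≠ h (x n) l := by
      by_contra hcon
      push_neg at hcon
      exact hzeq (funext hcon)
    have hsq : (z l0 - h (x n) l0) ^ 2 = 1 := by
      rcases hz l0 with h1 | h1 <;> rcases hHbin h hh (x n) l0 with h2 | h2 <;>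
        rw [h1, h2] <;> norm_num <;> exact absurd (h1.trans h2.symm) hl0
    have hsum : (1 : ℝ) ≤ ∑ l, (z l - h (x n) l) ^ 2 := by
      calc (1 : ℝ) = (z l0 - h (x n) l0) ^ 2 := hsq.symm
        _ ≤ ∑ l, (z l - h (x n) l) ^ 2 :=
          Finset.single_le_sum (f := fun l => (z l - h (x n) l) ^ 2) (fun i _ => sq_nonneg _) (Finset.mem_univ l0)
    have h1 : ∑ i, (x n i - f (h (x n)) i) ^ 2 ≤ μ := by
      calc ∑ i, (x n i - f (h (x n)) i) ^ 2 ≤ C := hbound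
        _ ≤ max C 0 := le_max_left _ _
        _ ≤ μ := le_of_lt hμ
    calc ∑ i, (x n i - f (h (x n)) i) ^ 2 ≤ μ := h1
      _ ≤ μ * ∑ l, (z l - h (x n) l) ^ 2 := by nlinarith
      _ ≤ ∑ i, (x n i - f z i) ^ 2 + μ * ∑ l, (z l - h (x n) l) ^ 2 := by
          have : (0:ℝ) ≤ ∑ i, (x n i - f z i) ^ 2 :=
            Finset.sum_nonneg fun i _ => sq_nonneg _
          linarith
end

section
/- Let Q be a real symmetric n×n matrix, b ∈ ℝⁿ, and consider minimizing f(x) = (1/2)xᵀQx + bᵀx over x ∈ {−1,1}ⁿ. Let x ∈ {−1,1}ⁿ, let X = diag(x), let e ∈ ℝⁿ be the all-ones vector, and let λ_min be the smallest eigenvalue of Q. If λ_min·e ≥ XQXe + Xb componentwise, then x is a global minimizer of f over {−1,1}ⁿ. -/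
open Matrix BigOperators

/-- Beck–Teboulle sufficient condition: if `λ_min e ≥ X Q X e + X b` componentwise, then
`x ∈ {−1,1}ⁿ` is a global minimizer of `f(x) = ½ xᵀQx + bᵀx` over `{−1,1}ⁿ`. -/
theorem stmt_6 {n : ℕ} [NeZero n] (Q : Matrix (Fin n) (Fin n) ℝ) (hQ : Q.IsHermitian)
    (b : Fin n → ℝ) (x : Fin n → ℝ) (hx : ∀ i, x i = 1 ∨ x i = -1)
    (hcond : ∀ i,
      (Matrix.diagonal x * Q * Matrix.diagonal x).mulVec (fun _ => (1 : ℝ)) i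
          + (Matrix.diagonal x).mulVec b i
        ≤ Finset.univ.inf' Finset.univ_nonempty hQ.eigenvalues) :
    ∀ z : Fin n → ℝ, (∀ i, z i = 1 ∨ z i = -1) →
      (1 / 2) * (x ⬝ᵥ Q.mulVec x) + b ⬝ᵥ x ≤ (1 / 2) * (z ⬝ᵥ Q.mulVec z) + b ⬝ᵥ z := by
  classical
  set lam : ℝ := Finset.univ.inf' Finset.univ_nonempty hQ.eigenvalues with hlam
  -- squares are one
  have hx2 : ∀ i, x i * x i = 1 := by
    intro i; rcases hx i with h | h <;> rw [h] <;> norm_num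
  -- the componentwise condition simplified
  have hcond' : ∀ i, x i * ((Q *ᵥ x) i + b i) ≤ lam := by
    intro i
    have h := hcond i
    have hxe : (Matrix.diagonal x) *ᵥ (fun _ => (1 : ℝ)) = x := by
      funext j; simp [mulVec_diagonal]
    have h1 : (Matrix.diagonal x * Q * Matrix.diagonal x) *ᵥ (fun _ => (1 : ℝ))
        = Matrix.diagonal x *ᵥ (Q *ᵥ x) := by
      rw [← mulVec_mulVec, ← mulVec_mulVec, hxe]
    rw [h1] at h
    simp only [mulVec_diagonal] at h
    calc x i * ((Q *ᵥ x) i + b i) = x i * (Q *ᵥ x) i + x i * b i := by ring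
    _ ≤ lam := h
  -- Q - lam • 1 is positive semidefinite
  have hps : (Q - lam • (1 : Matrix (Fin n) (Fin n) ℝ)).PosSemidef := by
    set U : Matrix (Fin n) (Fin n) ℝ := (hQ.eigenvectorUnitary : Matrix (Fin n) (Fin n) ℝ)
    have hUU : U * Uᴴ = 1 := by
      rw [← Matrix.star_eq_conjTranspose]
      exact Unitary.mul_star_self_of_mem hQ.eigenvectorUnitary.2
    have hdec : Q - lam • (1 : Matrix (Fin n) (Fin n) ℝ)
        = U * Matrix.diagonal (fun i => hQ.eigenvalues i - lam) * Uᴴ := by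
      have h1 : lam • (1 : Matrix (Fin n) (Fin n) ℝ)
          = U * (lam • (1 : Matrix (Fin n) (Fin n) ℝ)) * Uᴴ := by
        rw [Matrix.mul_smul, Matrix.smul_mul, mul_one, hUU]
      conv_lhs => rw [hQ.spectral_theorem, h1]
      rw [Unitary.conjStarAlgAut_apply, ← Matrix.star_eq_conjTranspose, ← Matrix.sub_mul, ← Matrix.mul_sub,
        Matrix.smul_one_eq_diagonal, Matrix.diagonal_sub]
      congr 1
    rw [hdec]
    refine PosSemidef.mul_mul_conjTranspose_same ?_ U
    refine Matrix.posSemidef_diagonal_iff.mpr fun i => ?_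
    exact sub_nonneg.2 (Finset.inf'_le _ (Finset.mem_univ i))
  have hpsd : ∀ v : Fin n → ℝ, lam * (v ⬝ᵥ v) ≤ v ⬝ᵥ Q *ᵥ v := by
    intro v
    have h := hps.dotProduct_mulVec_nonneg v
    simp only [star_trivial, sub_mulVec, smul_mulVec, one_mulVec,
      dotProduct_sub, dotProduct_smul, smul_eq_mul] at h
    linarith
  -- symmetry of the bilinear form
  have hsymm : ∀ v w : Fin n → ℝ, v ⬝ᵥ Q *ᵥ w = w ⬝ᵥ Q *ᵥ v := by
    intro v w
    have hQt : Qᵀ = Q := by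
      have := hQ.eq
      rwa [Matrix.conjTranspose_eq_transpose_of_trivial] at this
    rw [Matrix.dotProduct_mulVec, ← Matrix.mulVec_transpose, hQt, dotProduct_comm]
  intro z hz
  have hz2 : ∀ i, z i = 1 ∨ z i = -1 := hz
  set u : Fin n → ℝ := z - x with hu
  -- quadratic form on u
  have e1 : u ⬝ᵥ Q *ᵥ u = z ⬝ᵥ Q *ᵥ z - 2 * (x ⬝ᵥ Q *ᵥ z) + x ⬝ᵥ Q *ᵥ x := by
    rw [hu, sub_dotProduct, Matrix.mulVec_sub, dotProduct_sub,
      dotProduct_sub, hsymm z x]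
    ring
  -- norm of u
  have e2 : u ⬝ᵥ u = 2 * ∑ i, (1 - x i * z i) := by
    rw [hu, dotProduct, Finset.mul_sum]
    refine Finset.sum_congr rfl fun i _ => ?_
    have h1 := hx2 i
    have h2 : z i * z i = 1 := by rcases hz2 i with h | h <;> rw [h] <;> norm_num
    simp only [Pi.sub_apply]
    nlinarith [h1, h2]
  -- the linear term as a sum
  have e3 : ∑ i, (x i * ((Q *ᵥ x) i + b i)) * (1 - x i * z i)
      = x ⬝ᵥ Q *ᵥ x + b ⬝ᵥ x - x ⬝ᵥ Q *ᵥ z - b ⬝ᵥ z := by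
    have hxz : x ⬝ᵥ Q *ᵥ z = z ⬝ᵥ Q *ᵥ x := hsymm x z
    rw [hxz]
    simp only [dotProduct]
    rw [← Finset.sum_add_distrib, ← Finset.sum_sub_distrib, ← Finset.sum_sub_distrib]
    refine Finset.sum_congr rfl fun i _ => ?_
    have h1 := hx2 i
    linear_combination (-(z i * ((Q *ᵥ x) i + b i))) * h1
  -- per-coordinate bound
  have hterm : ∑ i, (x i * ((Q *ᵥ x) i + b i)) * (1 - x i * z i)
      ≤ lam * ∑ i, (1 - x i * z i) := by
    rw [Finset.mul_sum]
    refine Finset.sum_le_sum fun i _ => ?_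
    have hs : x i * z i ≤ 1 := by
      rcases hx i with h | h <;> rcases hz2 i with h' | h' <;> rw [h, h'] <;> norm_num
    exact mul_le_mul_of_nonneg_right (hcond' i) (by linarith)
  have hquad : lam * (2 * ∑ i, (1 - x i * z i)) ≤ u ⬝ᵥ Q *ᵥ u := by
    rw [← e2]; exact hpsd u
  rw [e1] at hquad
  rw [e3] at hterm
  linarith
end

section
/- Let Q be a real symmetric n×n matrix, b ∈ ℝⁿ, and consider minimizing f(x) = (1/2)xᵀQx + bᵀx over x ∈ {−1,1}ⁿ. Let x ∈ {−1,1}ⁿ, X = diag(x), and e the all-ones vector. If x is a global minimizer of f over {−1,1}ⁿ, then XQXe + Xb ≤ d componentwise, where d ∈ ℝⁿ is the vector of diagonal entries of Q, d_i = q_ii. -/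
open Matrix BigOperators

/-- Beck–Teboulle necessary condition: if `x ∈ {−1,1}ⁿ` is a global minimizer of
`f(x) = ½ xᵀQx + bᵀx` over `{−1,1}ⁿ`, then `X Q X e + X b ≤ diag(Q) e` componentwise. -/
theorem stmt_7 {n : ℕ} (Q : Matrix (Fin n) (Fin n) ℝ) (hQ : Q.IsHermitian)
    (b : Fin n → ℝ) (x : Fin n → ℝ) (hx : ∀ i, x i = 1 ∨ x i = -1)
    (hmin : ∀ z : Fin n → ℝ, (∀ i, z i = 1 ∨ z i = -1) →
      (1 / 2) * (x ⬝ᵥ Q.mulVec x) + b ⬝ᵥ x ≤ (1 / 2) * (z ⬝ᵥ Q.mulVec z) + b ⬝ᵥ z) :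
    ∀ i,
      (Matrix.diagonal x * Q * Matrix.diagonal x).mulVec (fun _ => (1 : ℝ)) i
          + (Matrix.diagonal x).mulVec b i
        ≤ Q i i := by
  intro i
  have hsym : ∀ j k, Q j k = Q k j := by
    intro j k
    have := congrFun (congrFun hQ k) j
    simpa [Matrix.conjTranspose_apply] using this
  have hx2 : x i * x i = 1 := by rcases hx i with h | h <;> rw [h] <;> ring
  set u : Fin n → ℝ := Pi.single i 1 with hu
  set z : Fin n → ℝ := x + (-2 * x i) • u with hz
  have hzapp : ∀ j, z j = x j + (-2 * x i) * u j := fun j => rfl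
  have hzpm : ∀ j, z j = 1 ∨ z j = -1 := by
    intro j
    rcases eq_or_ne j i with h | h
    · subst h
      rw [hzapp, hu]
      rcases hx j with h1 | h1 <;> [right; left] <;>
        simp [Pi.single_eq_same, h1] <;> ring
    · rw [hzapp, hu, Pi.single_eq_of_ne h]
      simpa using hx j
  have key := hmin z hzpm
  have hQu : ∀ j, Q.mulVec u j = Q j i := by
    intro j
    simp [Matrix.mulVec, dotProduct, hu, Pi.single_apply, mul_ite]
  have h1 : x ⬝ᵥ Q.mulVec u = Q.mulVec x i := by
    have e1 : x ⬝ᵥ Q.mulVec u = ∑ j, x j * Q j i := by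
      simp only [dotProduct]
      exact Finset.sum_congr rfl fun j _ => by rw [hQu]
    have e2 : Q.mulVec x i = ∑ j, Q i j * x j := rfl
    rw [e1, e2]
    exact Finset.sum_congr rfl fun j _ => by rw [hsym i j]; ring
  have h2 : u ⬝ᵥ Q.mulVec x = Q.mulVec x i := by
    simp [dotProduct, hu, Pi.single_apply, ite_mul]
  have h3 : u ⬝ᵥ Q.mulVec u = Q i i := by
    simp [dotProduct, hu, Pi.single_apply, ite_mul, hQu]
  have h4 : b ⬝ᵥ z = b ⬝ᵥ x + (-2 * x i) * b i := by
    rw [hz, dotProduct_add, dotProduct_smul]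
    simp only [smul_eq_mul]
    congr 1
    simp [dotProduct, hu, Pi.single_apply, mul_ite]
  have h5 : z ⬝ᵥ Q.mulVec z
      = x ⬝ᵥ Q.mulVec x + (-2 * x i) * Q.mulVec x i + (-2 * x i) * Q.mulVec x i
        + ((-2 * x i) * (-2 * x i)) * Q i i := by
    rw [hz, Matrix.mulVec_add, Matrix.mulVec_smul, dotProduct_add,
      add_dotProduct, add_dotProduct, dotProduct_smul,
      dotProduct_smul, smul_dotProduct, smul_dotProduct,
      h1, h2, h3]
    simp only [smul_eq_mul]
    ring
  rw [h4, h5] at key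
  have hgoal1 : (Matrix.diagonal x * Q * Matrix.diagonal x).mulVec (fun _ => (1 : ℝ)) i
      = x i * Q.mulVec x i := by
    have hentry : ∀ j, (Matrix.diagonal x * Q * Matrix.diagonal x) i j
        = x i * Q i j * x j := by
      intro j; rw [Matrix.mul_diagonal, Matrix.diagonal_mul]
    simp only [Matrix.mulVec, dotProduct, hentry]
    rw [Finset.mul_sum]
    exact Finset.sum_congr rfl fun j _ => by ring
  have hgoal2 : (Matrix.diagonal x).mulVec b i = x i * b i := by
    simp [Matrix.mulVec_diagonal]
  rw [hgoal1, hgoal2]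
  have h6 : x i * x i * Q i i = Q i i := by rw [hx2, one_mul]
  nlinarith [key, h6]
end

section
/- Let Q be a real symmetric n×n matrix, b ∈ ℝⁿ, and consider minimizing f(x) = (1/2)xᵀQx + bᵀx over x ∈ {−1,1}ⁿ. Let x ∈ {−1,1}ⁿ, X = diag(x), e the all-ones vector, and define q̃ ∈ ℝⁿ by q̃_i = q_ii − Σ_{j≠i} |q_ij| for i = 1,…,n. If q̃ ≥ XQXe + Xb componentwise, then x is a global minimizer of f over {−1,1}ⁿ. -/
open Matrix BigOperators

/-- Jeyakumar et al. sufficient condition: with `q̃_i = q_ii − Σ_{j≠i} |q_ij|`, if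
`q̃ ≥ X Q X e + X b` componentwise then `x ∈ {−1,1}ⁿ` is a global minimizer of
`f(x) = ½ xᵀQx + bᵀx` over `{−1,1}ⁿ`. -/
theorem stmt_8 {n : ℕ} (Q : Matrix (Fin n) (Fin n) ℝ) (hQ : Q.IsHermitian)
    (b : Fin n → ℝ) (x : Fin n → ℝ) (hx : ∀ i, x i = 1 ∨ x i = -1)
    (hcond : ∀ i,
      (Matrix.diagonal x * Q * Matrix.diagonal x).mulVec (fun _ => (1 : ℝ)) i
          + (Matrix.diagonal x).mulVec b i
        ≤ Q i i - ∑ j ∈ Finset.univ.erase i, |Q i j|) :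
    ∀ z : Fin n → ℝ, (∀ i, z i = 1 ∨ z i = -1) →
      (1 / 2) * (x ⬝ᵥ Q.mulVec x) + b ⬝ᵥ x ≤ (1 / 2) * (z ⬝ᵥ Q.mulVec z) + b ⬝ᵥ z := by
  intro z hz
  have hsym : ∀ i j, Q i j = Q j i := fun i j => by
    simpa using hQ.apply j i
  have hx2 : ∀ i, x i * x i = 1 := fun i => by rcases hx i with h | h <;> rw [h] <;> norm_num
  set t : Fin n → ℝ := fun i => 1 - x i * z i with ht
  have ht02 : ∀ i, t i = 0 ∨ t i = 2 := fun i => by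
    rcases hx i with h | h <;> rcases hz i with h' | h' <;> simp [ht, h, h'] <;> norm_num
  have ht0 : ∀ i, 0 ≤ t i := fun i => by rcases ht02 i with h | h <;> rw [h] <;> norm_num
  have ht2 : ∀ i, t i ≤ 2 := fun i => by rcases ht02 i with h | h <;> rw [h] <;> norm_num
  have htsq : ∀ i, t i * t i = 2 * t i := fun i => by rcases ht02 i with h | h <;> rw [h] <;> norm_num
  have hzx : ∀ i, z i = x i * (1 - t i) := fun i => by
    have h2 := hx2 i
    simp only [ht]
    linear_combination (-(z i)) * h2
  -- rewrite the condition
  have hcond' : ∀ i, (∑ j, Q i j * x i * x j) + x i * b i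
      ≤ Q i i - ∑ j ∈ Finset.univ.erase i, |Q i j| := by
    intro i
    have h := hcond i
    have e1 : (Matrix.diagonal x * Q * Matrix.diagonal x).mulVec (fun _ => (1 : ℝ)) i
        = ∑ j, Q i j * x i * x j := by
      simp [Matrix.mulVec, dotProduct, Matrix.mul_apply, Matrix.diagonal_apply,
        Finset.sum_ite_eq, Finset.mul_sum]
      apply Finset.sum_congr rfl
      intro j _
      ring
    have e2 : (Matrix.diagonal x).mulVec b i = x i * b i := by
      simp [Matrix.mulVec, dotProduct, Matrix.diagonal_apply]
    rw [e1, e2] at h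
    exact h
  -- the cross-term symmetry
  have hcross : (∑ i, ∑ j, Q i j * x i * x j * t j) = ∑ i, ∑ j, Q i j * x i * x j * t i := by
    rw [Finset.sum_comm]
    exact Finset.sum_congr rfl fun i _ => Finset.sum_congr rfl fun j _ => by
      rw [hsym j i]; ring
  -- expand dot products
  simp only [dotProduct, Matrix.mulVec]
  -- key identity
  have hAx : ∀ w : Fin n → ℝ, (∑ i, w i * ∑ j, Q i j * w j) = ∑ i, ∑ j, Q i j * w i * w j := by
    intro w
    refine Finset.sum_congr rfl fun i _ => ?_
    rw [Finset.mul_sum]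
    exact Finset.sum_congr rfl fun j _ => by ring
  have expz : (∑ i, z i * ∑ j, Q i j * z j)
      = (∑ i, ∑ j, Q i j * x i * x j) + (∑ i, ∑ j, Q i j * x i * x j * (t i * t j))
        - (∑ i, ∑ j, Q i j * x i * x j * t i) - (∑ i, ∑ j, Q i j * x i * x j * t j) := by
    rw [hAx z]
    rw [← Finset.sum_add_distrib, ← Finset.sum_sub_distrib, ← Finset.sum_sub_distrib]
    refine Finset.sum_congr rfl fun i _ => ?_
    rw [← Finset.sum_add_distrib, ← Finset.sum_sub_distrib, ← Finset.sum_sub_distrib]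
    refine Finset.sum_congr rfl fun j _ => ?_
    rw [hzx i, hzx j]; ring
  have expbz : (∑ i, b i * z i) = (∑ i, b i * x i) - ∑ i, (x i * b i) * t i := by
    rw [← Finset.sum_sub_distrib]
    refine Finset.sum_congr rfl fun i _ => ?_
    rw [hzx i]; ring
  -- the linear part bound
  have hlin : (∑ i, ∑ j, Q i j * x i * x j * t i) + ∑ i, (x i * b i) * t i
      ≤ ∑ i, (Q i i - ∑ j ∈ Finset.univ.erase i, |Q i j|) * t i := by
    rw [← Finset.sum_add_distrib]
    refine Finset.sum_le_sum fun i _ => ?_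
    have h1 : (∑ j, Q i j * x i * x j * t i) = ((∑ j, Q i j * x i * x j) + x i * b i) * t i
        - (x i * b i) * t i := by
      rw [add_mul, Finset.sum_mul]
      ring
    rw [h1]
    have := mul_le_mul_of_nonneg_right (hcond' i) (ht0 i)
    linarith
  -- the quadratic part bound
  have hquad : ∀ i, (Q i i - ∑ j ∈ Finset.univ.erase i, |Q i j|) * t i
      ≤ (1/2) * ∑ j, Q i j * x i * x j * (t i * t j) := by
    intro i
    have hsplit : (∑ j, Q i j * x i * x j * (t i * t j))
        = Q i i * x i * x i * (t i * t i)
          + ∑ j ∈ Finset.univ.erase i, Q i j * x i * x j * (t i * t j) := by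
      rw [← Finset.add_sum_erase _ _ (Finset.mem_univ i)]
    rw [hsplit]
    have hdiag : Q i i * x i * x i * (t i * t i) = 2 * (Q i i * t i) := by
      linear_combination (Q i i * (t i * t i)) * hx2 i + Q i i * htsq i
    rw [hdiag]
    have hoff : - ∑ j ∈ Finset.univ.erase i, |Q i j| * (2 * t i)
        ≤ ∑ j ∈ Finset.univ.erase i, Q i j * x i * x j * (t i * t j) := by
      rw [← Finset.sum_neg_distrib]
      refine Finset.sum_le_sum fun j _ => ?_
      rcases hx i with h | h <;> rcases hx j with h' | h' <;> rw [h, h'] <;>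
        nlinarith [mul_nonneg (mul_nonneg (abs_nonneg (Q i j)) (ht0 i)) (sub_nonneg.2 (ht2 j)),
          mul_nonneg (mul_nonneg (abs_nonneg (Q i j)) (ht0 i)) (ht0 j),
          mul_le_mul_of_nonneg_right (neg_abs_le (Q i j)) (mul_nonneg (ht0 i) (ht0 j)),
          mul_le_mul_of_nonneg_right (le_abs_self (Q i j)) (mul_nonneg (ht0 i) (ht0 j))]
    have hs1 : (∑ j ∈ Finset.univ.erase i, |Q i j| * (2 * t i))
        = 2 * ∑ j ∈ Finset.univ.erase i, |Q i j| * t i := by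
      rw [Finset.mul_sum]
      exact Finset.sum_congr rfl fun j _ => by ring
    have hs2 : (Q i i - ∑ j ∈ Finset.univ.erase i, |Q i j|) * t i
        = Q i i * t i - ∑ j ∈ Finset.univ.erase i, |Q i j| * t i := by
      rw [sub_mul, Finset.sum_mul]
    rw [hs1] at hoff
    rw [hs2]
    linarith [hoff]
  have hquadsum : (∑ i, (Q i i - ∑ j ∈ Finset.univ.erase i, |Q i j|) * t i)
      ≤ (1/2) * ∑ i, ∑ j, Q i j * x i * x j * (t i * t j) := by
    rw [Finset.mul_sum]
    exact Finset.sum_le_sum fun i _ => hquad i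
  rw [expz, expbz, hAx x, hcross]
  linarith [hlin, hquadsum]
end

section
/- Let Q be a real symmetric positive semidefinite n×n matrix and b ∈ ℝⁿ, and let f(x) = (1/2)xᵀQx + bᵀx. For x ∈ {−1,1}ⁿ with X = diag(x) and e the all-ones vector, the following are equivalent: (i) x is simultaneously a global minimizer of f over {−1,1}ⁿ and a global minimizer of f over [−1,1]ⁿ; (ii) XQXe + Xb ≤ 0 componentwise. -/
open Matrix BigOperators

/-- For positive semidefinite `Q`, a point `x ∈ {−1,1}ⁿ` is simultaneously a global minimizer
of `f(x) = ½ xᵀQx + bᵀx` over `{−1,1}ⁿ` and over the box `[−1,1]ⁿ` if and only if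
`X Q X e + X b ≤ 0` componentwise. -/
theorem stmt_10 {n : ℕ} (Q : Matrix (Fin n) (Fin n) ℝ) (hQ : Q.PosSemidef)
    (b : Fin n → ℝ) (x : Fin n → ℝ) (hx : ∀ i, x i = 1 ∨ x i = -1) :
    ((∀ z : Fin n → ℝ, (∀ i, z i = 1 ∨ z i = -1) →
        (1 / 2) * (x ⬝ᵥ Q.mulVec x) + b ⬝ᵥ x ≤ (1 / 2) * (z ⬝ᵥ Q.mulVec z) + b ⬝ᵥ z) ∧
      (∀ z : Fin n → ℝ, (∀ i, -1 ≤ z i ∧ z i ≤ 1) →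
        (1 / 2) * (x ⬝ᵥ Q.mulVec x) + b ⬝ᵥ x ≤ (1 / 2) * (z ⬝ᵥ Q.mulVec z) + b ⬝ᵥ z))
    ↔ ∀ i,
        (Matrix.diagonal x * Q * Matrix.diagonal x).mulVec (fun _ => (1 : ℝ)) i
            + (Matrix.diagonal x).mulVec b i
          ≤ 0 := by
  have hsym : ∀ i j, Q i j = Q j i := fun i j => by
    have := hQ.1.apply j i
    simpa using this
  have hdot : ∀ u v : Fin n → ℝ, u ⬝ᵥ Q.mulVec v = v ⬝ᵥ Q.mulVec u := by
    intro u v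
    simp only [dotProduct, mulVec, Finset.mul_sum]
    rw [Finset.sum_comm]
    refine Finset.sum_congr rfl fun i _ => Finset.sum_congr rfl fun j _ => ?_
    rw [hsym j i]; ring
  have hpsd : ∀ d : Fin n → ℝ, 0 ≤ d ⬝ᵥ Q.mulVec d := fun d => by simpa using hQ.dotProduct_mulVec_nonneg d
  have hdiag : ∀ i, 0 ≤ Q i i := by
    intro i
    have := hpsd (Pi.single i 1)
    simpa [Matrix.mulVec_single, single_dotProduct] using this
  have hxsq : ∀ i, x i * x i = 1 := by
    intro i; rcases hx i with h | h <;> rw [h] <;> norm_num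
  -- simplify the RHS condition
  have hrhs : ∀ i, (Matrix.diagonal x * Q * Matrix.diagonal x).mulVec (fun _ => (1 : ℝ)) i
      + (Matrix.diagonal x).mulVec b i = x i * ((Q.mulVec x) i + b i) := by
    intro i
    have h1 : ((Matrix.diagonal x).mulVec fun _ => (1 : ℝ)) = x := by
      funext j; simp [Matrix.mulVec_diagonal]
    rw [← Matrix.mulVec_mulVec, ← Matrix.mulVec_mulVec, h1,
      Matrix.mulVec_diagonal, Matrix.mulVec_diagonal]
    ring
  -- key expansion identity
  have key : ∀ z : Fin n → ℝ,
      (1 / 2) * (z ⬝ᵥ Q.mulVec z) + b ⬝ᵥ z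
        = ((1 / 2) * (x ⬝ᵥ Q.mulVec x) + b ⬝ᵥ x)
          + ((1 / 2) * ((z - x) ⬝ᵥ Q.mulVec (z - x)) + (Q.mulVec x + b) ⬝ᵥ (z - x)) := by
    intro z
    have e1 : (z - x) ⬝ᵥ Q.mulVec (z - x)
        = z ⬝ᵥ Q.mulVec z - z ⬝ᵥ Q.mulVec x - x ⬝ᵥ Q.mulVec z + x ⬝ᵥ Q.mulVec x := by
      simp only [Matrix.mulVec_sub, sub_dotProduct, dotProduct_sub]
      ring
    have e2 : (Q.mulVec x + b) ⬝ᵥ (z - x)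
        = x ⬝ᵥ Q.mulVec z + b ⬝ᵥ z - x ⬝ᵥ Q.mulVec x - b ⬝ᵥ x := by
      simp only [add_dotProduct, dotProduct_sub]
      rw [dotProduct_comm (Q.mulVec x) z, dotProduct_comm (Q.mulVec x) x,
        hdot z x]
      ring
    rw [e1, e2, hdot z x]
    ring
  constructor
  · rintro ⟨-, hbox⟩ i
    rw [hrhs i]
    by_contra hpos
    push_neg at hpos
    set g : ℝ := x i * ((Q.mulVec x) i + b i) with hg
    set t : ℝ := min 2 (g / (Q i i + 1)) with ht
    have hQi : (0 : ℝ) < Q i i + 1 := by linarith [hdiag i]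
    have ht0 : 0 < t := lt_min (by norm_num) (div_pos hpos hQi)
    have ht2 : t ≤ 2 := min_le_left _ _
    have htg : t ≤ g / (Q i i + 1) := min_le_right _ _
    set c : ℝ := -t * x i with hc
    set z : Fin n → ℝ := x + Pi.single i c with hz
    have hzbox : ∀ j, -1 ≤ z j ∧ z j ≤ 1 := by
      intro j
      by_cases hji : j = i
      · subst hji
        have : z j = x j * (1 - t) := by
          simp only [hz, Pi.add_apply, Pi.single_eq_same, hc]; ring
        rw [this]
        rcases hx j with h | h <;> rw [h] <;> constructor <;> nlinarith
      · have : z j = x j := by simp [hz, Pi.single_eq_of_ne hji]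
        rw [this]
        rcases hx j with h | h <;> rw [h] <;> norm_num
    have hle := hbox z hzbox
    rw [key z] at hle
    have hzx : z - x = Pi.single i c := by simp [hz]
    rw [hzx] at hle
    have hq1 : Pi.single i c ⬝ᵥ Q.mulVec (Pi.single i c) = c * (Q i i * c) := by
      rw [Matrix.mulVec_single, single_dotProduct]
      simp [Matrix.col_apply, mul_comm]
    have hq2 : (Q.mulVec x + b) ⬝ᵥ Pi.single i c = ((Q.mulVec x) i + b i) * c := by
      rw [dotProduct_single]; rfl
    rw [hq1, hq2] at hle
    -- hle : f(x) ≤ f(x) + ½ c Qii c + (…)c ; derive contradiction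
    have hcval : c * (Q i i * c) = t * t * Q i i := by
      have h := hxsq i
      calc c * (Q i i * c) = t * t * (x i * x i) * Q i i := by rw [hc]; ring
        _ = t * t * Q i i := by rw [h]; ring
    have hgp : ((Q.mulVec x) i + b i) * c = -t * g := by
      rw [hc, hg]; ring
    rw [hcval, hgp] at hle
    have hneg : (1 / 2) * (t * t * Q i i) + -t * g < 0 := by
      have h1 : t * (Q i i + 1) ≤ g := (le_div_iff₀ hQi).mp htg
      nlinarith [mul_le_mul_of_nonneg_left h1 ht0.le, mul_pos ht0 ht0, mul_pos ht0 hpos]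
    linarith
  · intro hcond
    have hcond' : ∀ i, x i * ((Q.mulVec x) i + b i) ≤ 0 := by
      intro i; have := hcond i; rwa [hrhs i] at this
    have hbox : ∀ z : Fin n → ℝ, (∀ i, -1 ≤ z i ∧ z i ≤ 1) →
        (1 / 2) * (x ⬝ᵥ Q.mulVec x) + b ⬝ᵥ x ≤ (1 / 2) * (z ⬝ᵥ Q.mulVec z) + b ⬝ᵥ z := by
      intro z hzbox
      rw [key z]
      have h1 : 0 ≤ (z - x) ⬝ᵥ Q.mulVec (z - x) := hpsd _
      have h2 : 0 ≤ (Q.mulVec x + b) ⬝ᵥ (z - x) := by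
        rw [dotProduct]
        refine Finset.sum_nonneg fun i _ => ?_
        have hci := hcond' i
        rcases hx i with h | h
        · have hg : (Q.mulVec x) i + b i ≤ 0 := by rw [h] at hci; linarith
          have hzi : z i - x i ≤ 0 := by rw [h]; linarith [(hzbox i).2]
          have : (0:ℝ) ≤ ((Q.mulVec x) i + b i) * (z i - x i) := by nlinarith
          simpa [Pi.add_apply, Pi.sub_apply] using this
        · have hg : 0 ≤ (Q.mulVec x) i + b i := by rw [h] at hci; linarith
          have hzi : 0 ≤ z i - x i := by rw [h]; linarith [(hzbox i).1]
          have : (0:ℝ) ≤ ((Q.mulVec x) i + b i) * (z i - x i) := mul_nonneg hg hzi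
          simpa [Pi.add_apply, Pi.sub_apply] using this
      linarith
    refine ⟨fun z hz => hbox z fun i => ?_, hbox⟩
    rcases hz i with h | h <;> rw [h] <;> norm_num
end

section
/- Let Q be a real symmetric positive semidefinite n×n matrix, b ∈ ℝⁿ, f(x) = (1/2)xᵀQx + bᵀx, and λ_min the smallest eigenvalue of Q. Suppose x ∈ [−1,1]ⁿ is a global minimizer of f over [−1,1]ⁿ, and let y = sgn(x) ∈ {−1,1}ⁿ (where sgn(t) = 1 if t ≥ 0 and −1 if t < 0) and Y = diag(y). If YQ(y − x) ≤ λ_min·e componentwise, then y is a global minimizer of f over {−1,1}ⁿ. -/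
open Matrix BigOperators

lemma rayleigh_min {n : ℕ} [NeZero n] (A : Matrix (Fin n) (Fin n) ℝ)
    (hA : A.IsHermitian) (v : Fin n → ℝ) :
    (Finset.univ.inf' Finset.univ_nonempty hA.eigenvalues) * (v ⬝ᵥ v) ≤ v ⬝ᵥ A *ᵥ v := by
  set U : Matrix (Fin n) (Fin n) ℝ := (hA.eigenvectorUnitary : Matrix (Fin n) (Fin n) ℝ) with hU
  set w : Fin n → ℝ := star U *ᵥ v with hw
  have hUU : U * star U = 1 := Matrix.mem_unitaryGroup_iff.mp hA.eigenvectorUnitary.2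
  have key : ∀ u : Fin n → ℝ, v ⬝ᵥ U *ᵥ u = w ⬝ᵥ u := by
    intro u
    rw [Matrix.dotProduct_mulVec]
    congr 1
    rw [hw, Matrix.star_eq_conjTranspose, Matrix.conjTranspose_eq_transpose_of_trivial,
      Matrix.mulVec_transpose]
  have hv2 : v ⬝ᵥ v = w ⬝ᵥ w := by
    have := key w
    rw [hw, Matrix.mulVec_mulVec, hUU] at this
    rw [hw]
    simpa using this
  have hAv : v ⬝ᵥ A *ᵥ v = w ⬝ᵥ (diagonal hA.eigenvalues) *ᵥ w := by
    conv_lhs => rw [hA.spectral_theorem, Unitary.conjStarAlgAut_apply]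
    rw [mul_assoc, ← Matrix.mulVec_mulVec, key, ← Matrix.mulVec_mulVec, ← hw]
    congr 2
  rw [hv2, hAv]
  have hwD : w ⬝ᵥ (diagonal hA.eigenvalues) *ᵥ w = ∑ i, hA.eigenvalues i * (w i)^2 := by
    simp [dotProduct, Matrix.mulVec_diagonal, sq]
    congr 1; ext i; ring
  have hww : w ⬝ᵥ w = ∑ i, (w i)^2 := by simp [dotProduct, sq]
  rw [hwD, hww, Finset.mul_sum]
  apply Finset.sum_le_sum
  intro i _
  have h1 : (Finset.univ.inf' Finset.univ_nonempty hA.eigenvalues) ≤ hA.eigenvalues i :=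
    Finset.inf'_le _ (Finset.mem_univ i)
  nlinarith [sq_nonneg (w i)]

/-- If `x` minimizes `f(x) = ½ xᵀQx + bᵀx` (with `Q` positive semidefinite) over the box
`[−1,1]ⁿ`, `y = sgn(x)`, and `Y Q (y − x) ≤ λ_min e` componentwise, then `y` is a global
minimizer of `f` over `{−1,1}ⁿ`. -/
theorem stmt_11 {n : ℕ} [NeZero n] (Q : Matrix (Fin n) (Fin n) ℝ) (hQ : Q.PosSemidef)
    (b : Fin n → ℝ) (x : Fin n → ℝ) (hx : ∀ i, -1 ≤ x i ∧ x i ≤ 1)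
    (hmin : ∀ z : Fin n → ℝ, (∀ i, -1 ≤ z i ∧ z i ≤ 1) →
      (1 / 2) * (x ⬝ᵥ Q.mulVec x) + b ⬝ᵥ x ≤ (1 / 2) * (z ⬝ᵥ Q.mulVec z) + b ⬝ᵥ z)
    (y : Fin n → ℝ) (hy : y = fun i => if 0 ≤ x i then (1 : ℝ) else -1)
    (hcond : ∀ i,
      (Matrix.diagonal y).mulVec (Q.mulVec (y - x)) i
        ≤ Finset.univ.inf' Finset.univ_nonempty hQ.isHermitian.eigenvalues) :
    ∀ z : Fin n → ℝ, (∀ i, z i = 1 ∨ z i = -1) →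
      (1 / 2) * (y ⬝ᵥ Q.mulVec y) + b ⬝ᵥ y ≤ (1 / 2) * (z ⬝ᵥ Q.mulVec z) + b ⬝ᵥ z := by
  intro z hz
  set lam := Finset.univ.inf' Finset.univ_nonempty hQ.isHermitian.eigenvalues with hlam
  set g : Fin n → ℝ := Q *ᵥ x + b with hg
  have hQT : Qᵀ = Q := by
    rw [← Matrix.conjTranspose_eq_transpose_of_trivial]; exact hQ.isHermitian
  have hsymm : ∀ u v : Fin n → ℝ, u ⬝ᵥ Q *ᵥ v = v ⬝ᵥ Q *ᵥ u := by
    intro u v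
    rw [Matrix.dotProduct_mulVec, ← Matrix.mulVec_transpose, hQT, dotProduct_comm]
  have hpsd : ∀ u : Fin n → ℝ, 0 ≤ u ⬝ᵥ Q *ᵥ u := by
    intro u; simpa using hQ.dotProduct_mulVec_nonneg u
  have hzbox : ∀ i, -1 ≤ z i ∧ z i ≤ 1 := by
    intro i; rcases hz i with h | h <;> rw [h] <;> norm_num
  have hyb : ∀ i, y i = 1 ∨ y i = -1 := by
    intro i; rw [hy]; by_cases h : 0 ≤ x i <;> simp [h]
  -- variational inequality
  have hVI : ∀ w : Fin n → ℝ, (∀ i, -1 ≤ w i ∧ w i ≤ 1) → 0 ≤ (w - x) ⬝ᵥ g := by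
    intro w hw
    set d : Fin n → ℝ := w - x with hd
    have hq : 0 ≤ d ⬝ᵥ Q *ᵥ d := hpsd d
    have key : ∀ t : ℝ, 0 < t → t ≤ 1 →
        0 ≤ d ⬝ᵥ g + t / 2 * (d ⬝ᵥ Q *ᵥ d) := by
      intro t ht ht1
      have hwt : ∀ i, -1 ≤ (x + t • d) i ∧ (x + t • d) i ≤ 1 := by
        intro i
        have h1 := (hx i).1; have h2 := (hx i).2
        have h3 := (hw i).1; have h4 := (hw i).2
        have : (x + t • d) i = (1 - t) * x i + t * w i := by
          simp [hd, Pi.add_apply, Pi.smul_apply, Pi.sub_apply, smul_eq_mul]; ring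
        rw [this]
        constructor <;> nlinarith
      have hm := hmin (x + t • d) hwt
      have hexp : (x + t • d) ⬝ᵥ Q *ᵥ (x + t • d)
          = x ⬝ᵥ Q *ᵥ x + 2 * t * (d ⬝ᵥ Q *ᵥ x) + t ^ 2 * (d ⬝ᵥ Q *ᵥ d) := by
        rw [Matrix.mulVec_add, Matrix.mulVec_smul, add_dotProduct,
          smul_dotProduct, dotProduct_add, dotProduct_add,
          dotProduct_smul, dotProduct_smul, hsymm x d]
        simp [smul_eq_mul]; ring
      have hbe : b ⬝ᵥ (x + t • d) = b ⬝ᵥ x + t * (b ⬝ᵥ d) := by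
        rw [dotProduct_add, dotProduct_smul]; simp [smul_eq_mul]
      have hdg : d ⬝ᵥ g = d ⬝ᵥ Q *ᵥ x + b ⬝ᵥ d := by
        rw [hg, dotProduct_add, dotProduct_comm d b]
      rw [hexp, hbe] at hm
      rw [hdg]
      nlinarith
    by_contra hcon
    push_neg at hcon
    set c := d ⬝ᵥ g
    set q := d ⬝ᵥ Q *ᵥ d
    set t : ℝ := min 1 (-c / (q + 1)) with htdef
    have hq1 : (0:ℝ) < q + 1 := by linarith
    have ht : 0 < t := lt_min one_pos (div_pos (by linarith) hq1)
    have ht1 : t ≤ 1 := min_le_left _ _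
    have ht2 : t ≤ -c / (q + 1) := min_le_right _ _
    have ht3 : t * (q + 1) ≤ -c := (le_div_iff₀ hq1).mp ht2
    have := key t ht ht1
    nlinarith
  -- KKT componentwise
  have hK : ∀ i, ∀ c : ℝ, -1 ≤ c → c ≤ 1 → 0 ≤ (c - x i) * g i := by
    intro i c h1 h2
    have hb : ∀ j, -1 ≤ Function.update x i c j ∧ Function.update x i c j ≤ 1 := by
      intro j
      rcases eq_or_ne j i with hj | hj
      · subst hj; simp [Function.update_self]; exact ⟨h1, h2⟩
      · simp [Function.update_of_ne hj]; exact ⟨(hx j).1, (hx j).2⟩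
    have hvi := hVI _ hb
    have he : Function.update x i c - x = Pi.single i (c - x i) := by
      funext j
      rcases eq_or_ne j i with hj | hj
      · subst hj; simp [Function.update_self, Pi.single_apply]
      · simp [Function.update_of_ne hj, Pi.single_apply, hj]
    rwa [he, single_dotProduct] at hvi
  have gy : ∀ i, (y i - x i) * g i = 0 := by
    intro i
    rcases lt_or_ge (x i) 1 with h1 | h1
    · rcases lt_or_ge (-1) (x i) with h2 | h2
      · have ha := hK i 1 (by norm_num) le_rfl
        have hb := hK i (-1) le_rfl (by norm_num)
        have hg0 : g i = 0 := by nlinarith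
        simp [hg0]
      · have hxi : x i = -1 := le_antisymm (by linarith) (hx i).1
        have hyi : y i = -1 := by
          rw [hy]; simp only; rw [if_neg (by rw [hxi]; norm_num)]
        rw [hyi, hxi]; ring
    · have hxi : x i = 1 := le_antisymm (hx i).2 h1
      have hyi : y i = 1 := by
        rw [hy]; simp only; rw [if_pos (by rw [hxi]; norm_num)]
      rw [hyi, hxi]; ring
  have hyx0 : (y - x) ⬝ᵥ g = 0 := by
    simp only [dotProduct, Pi.sub_apply]
    exact Finset.sum_eq_zero fun i _ => gy i
  have hzg : 0 ≤ (z - y) ⬝ᵥ g := by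
    have h1 := hVI z hzbox
    have h2 : (z - y) ⬝ᵥ g = (z - x) ⬝ᵥ g - (y - x) ⬝ᵥ g := by
      rw [← sub_dotProduct]
      congr 1
      abel
    rw [h2, hyx0]
    linarith
  -- quadratic part
  set d : Fin n → ℝ := z - y with hd
  set S : ℝ := ∑ i, (1 - z i * y i) with hS
  have hdd : d ⬝ᵥ d = 2 * S := by
    simp only [dotProduct, hd, Pi.sub_apply, hS, Finset.mul_sum]
    apply Finset.sum_congr rfl
    intro i _
    rcases hz i with h | h <;> rcases hyb i with h' | h' <;> rw [h, h'] <;> ring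
  have hray : lam * (d ⬝ᵥ d) ≤ d ⬝ᵥ Q *ᵥ d := rayleigh_min Q hQ.isHermitian d
  have hlin : -(lam * S) ≤ d ⬝ᵥ Q *ᵥ (y - x) := by
    have : -(lam * S) = ∑ i, -(1 - z i * y i) * lam := by
      rw [hS, Finset.mul_sum, ← Finset.sum_neg_distrib]
      apply Finset.sum_congr rfl; intro i _; ring
    rw [this, dotProduct]
    apply Finset.sum_le_sum
    intro i _
    have hyu : y i * (Q *ᵥ (y - x)) i ≤ lam := by
      have := hcond i
      rwa [Matrix.mulVec_diagonal] at this
    have hnn : 0 ≤ 1 - z i * y i := by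
      rcases hz i with h | h <;> rcases hyb i with h' | h' <;> rw [h, h'] <;> norm_num
    have hdi : d i = -(y i) * (1 - z i * y i) := by
      simp only [hd, Pi.sub_apply]
      rcases hyb i with h' | h' <;> rw [h'] <;> ring
    rw [hdi]
    nlinarith
  have hquad : 0 ≤ (1/2) * (d ⬝ᵥ Q *ᵥ d) + d ⬝ᵥ Q *ᵥ (y - x) := by
    rw [hdd] at hray
    linarith
  -- final assembly
  have hzyd : z = y + d := by rw [hd]; abel
  have hexp : z ⬝ᵥ Q *ᵥ z = y ⬝ᵥ Q *ᵥ y + 2 * (d ⬝ᵥ Q *ᵥ y) + d ⬝ᵥ Q *ᵥ d := by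
    conv_lhs => rw [hzyd]
    rw [Matrix.mulVec_add, add_dotProduct, dotProduct_add,
      dotProduct_add, hsymm y d]
    ring
  have hbz : b ⬝ᵥ z = b ⬝ᵥ y + b ⬝ᵥ d := by
    conv_lhs => rw [hzyd]
    rw [dotProduct_add]
  have hsplit : d ⬝ᵥ Q *ᵥ y = d ⬝ᵥ Q *ᵥ x + d ⬝ᵥ Q *ᵥ (y - x) := by
    have hxy2 : x + (y - x) = y := by abel
    have hxy : Q *ᵥ x + Q *ᵥ (y - x) = Q *ᵥ y := by
      rw [← Matrix.mulVec_add, hxy2]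
    rw [← dotProduct_add, hxy]
  have hdg : d ⬝ᵥ g = d ⬝ᵥ Q *ᵥ x + b ⬝ᵥ d := by
    rw [hg, dotProduct_add, dotProduct_comm d b]
  have hzg' : 0 ≤ d ⬝ᵥ g := hzg
  show (1 / 2) * (y ⬝ᵥ Q *ᵥ y) + b ⬝ᵥ y ≤ (1 / 2) * (z ⬝ᵥ Q *ᵥ z) + b ⬝ᵥ z
  rw [hexp, hbz]
  linarith
end
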